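/- arXiv:2509.02893 — 2 statements merged into one kernel-verified Lean document; each statement's English description precedes it below -/
import Mathlib

section
/- For a Riordan array D = (g, f) with entries d_{n,k} = [t^n] g·f^k and a sequence Z with generating function Z(t), the recurrence d_{n+1,0} = Σ_{j≥0} z_j d_{n,j} holds for all n ≥ 0 if and only if g(t) = g(0)/(1 − t·Z(f(t))). -/
open PowerSeries

/-- Composition `g ∘ f` of formal power series (meaningful when `f` has zero
constant term). -/
noncomputable def pcomp {K : Type*} [Field K] (g f : PowerSeries K) : PowerSeries K :=
  PowerSeries.mk fun n => ∑ k ∈ Finset.range (n + 1), coeff k g * coeff n (f ^ k)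

lemma coeff_pow_eq_zero_of_lt {K : Type*} [Field K] {f : PowerSeries K}
    (hf0 : constantCoeff f = 0) {k n : ℕ} (h : n < k) :
    coeff n (f ^ k) = 0 := by
  have hx : (X : PowerSeries K) ^ k ∣ f ^ k :=
    pow_dvd_pow_of_dvd (X_dvd_iff.mpr hf0) k
  exact (X_pow_dvd_iff.mp hx) n h

lemma coeff_mul_pcomp {K : Type*} [Field K] (g f Z : PowerSeries K)
    (hf0 : constantCoeff f = 0) (n : ℕ) :
    coeff n (g * pcomp Z f) =
      ∑ j ∈ Finset.range (n + 1), coeff j Z * coeff n (g * f ^ j) := by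
  rw [coeff_mul]
  have h1 : ∀ p ∈ Finset.HasAntidiagonal.antidiagonal n,
      coeff p.1 g * coeff p.2 (pcomp Z f) =
        ∑ k ∈ Finset.range (n + 1),
          coeff k Z * (coeff p.1 g * coeff p.2 (f ^ k)) := by
    intro p hp
    have hp2 : p.2 ≤ n := Finset.HasAntidiagonal.antidiagonal.snd_le hp
    rw [pcomp, coeff_mk, Finset.mul_sum]
    rw [Finset.sum_subset (Finset.range_subset_range.mpr (by omega : p.2 + 1 ≤ n + 1))
      (fun k hk hk' => by
        simp only [Finset.mem_range] at hk hk'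
        rw [coeff_pow_eq_zero_of_lt hf0 (by omega : p.2 < k)]; ring)]
    exact Finset.sum_congr rfl fun k _ => by ring
  rw [Finset.sum_congr rfl h1, Finset.sum_comm]
  exact Finset.sum_congr rfl fun k _ => by rw [coeff_mul, Finset.mul_sum]

/-- Z-sequence characterization of a Riordan array: the recurrence
`d_{n+1,0} = ∑_j z_j d_{n,j}` (with `d_{n,k} = [tⁿ] g·fᵏ`) holds for all `n ≥ 0`
iff `g(t) = g(0)/(1 − t·Z(f(t)))`. -/
theorem riordan_Z_sequence {K : Type*} [Field K] [CharZero K]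
    (g f Z : PowerSeries K)
    (hg : constantCoeff g ≠ 0)
    (hf0 : constantCoeff f = 0) (hf1 : coeff 1 f ≠ 0) :
    (∀ n : ℕ, coeff (n + 1) g =
      ∑ j ∈ Finset.range (n + 1), coeff j Z * coeff n (g * f ^ j)) ↔
    g = C (constantCoeff g) * (1 - X * pcomp Z f)⁻¹ := by
  have hu : constantCoeff (1 - X * pcomp Z f) ≠ 0 := by
    simp
  rw [PowerSeries.eq_mul_inv_iff_mul_eq hu]
  have hshift : ∀ n : ℕ, coeff (n + 1) (g * (1 - X * pcomp Z f)) =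
      coeff (n + 1) g -
        ∑ j ∈ Finset.range (n + 1), coeff j Z * coeff n (g * f ^ j) := by
    intro n
    rw [mul_sub, mul_one, map_sub,
      show g * (X * pcomp Z f) = X * (g * pcomp Z f) by ring,
      coeff_succ_X_mul, coeff_mul_pcomp g f Z hf0 n]
  constructor
  · intro h
    ext m
    cases m with
    | zero =>
      simp [coeff_zero_eq_constantCoeff, mul_sub]
    | succ n =>
      rw [hshift n, ← h n, coeff_C]
      simp
  · intro h n
    have := congrArg (coeff (n + 1)) h
    rw [hshift n, coeff_C] at this
    simp only [Nat.succ_ne_zero, if_false] at this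
    exact sub_eq_zero.mp this
end

section
/- Fix ℓ ≥ 1. The set of multiple Riordan arrays (g; f₁, …, f_ℓ), with g ∈ K[[t^ℓ]] of order 0 and each f_j ∈ t·K[[t^ℓ]] with f_j'(0) ≠ 0, forms a group under the multiplication (g; f₁,…,f_ℓ)(d; h₁,…,h_ℓ) = (g·d(h); (f₁/h)·h₁(h), …, (f_ℓ/h)·h_ℓ(h)), where h = (f₁⋯f_ℓ)^{1/ℓ}, with identity (1; t, …, t). -/
open PowerSeries

/-- `f/t`: the coefficient shift of a power series. -/
noncomputable def pdivX {K : Type*} [Field K] (f : PowerSeries K) : PowerSeries K :=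
  PowerSeries.mk fun n => coeff (n + 1) f

/-- `g ∈ K[[t^ℓ]]`: only coefficients of exponents divisible by `ℓ` survive. -/
def InTl {K : Type*} [Field K] (ℓ : ℕ) (g : PowerSeries K) : Prop :=
  ∀ n : ℕ, ¬ ℓ ∣ n → coeff n g = 0

/-- A multiplier function: `f ∈ t·K[[t^ℓ]]` with `f'(0) ≠ 0`. -/
def IsMult {K : Type*} [Field K] (ℓ : ℕ) (f : PowerSeries K) : Prop :=
  constantCoeff f = 0 ∧ (∀ n : ℕ, n % ℓ ≠ 1 % ℓ → coeff n f = 0) ∧ coeff 1 f ≠ 0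

/-- A multiple Riordan array `(g; f₁, …, f_ℓ)` together with its chosen
`ℓ`-th root `h` of `f₁⋯f_ℓ`. -/
def IsMR {K : Type*} [Field K] (ℓ : ℕ)
    (p : PowerSeries K × (Fin ℓ → PowerSeries K) × PowerSeries K) : Prop :=
  InTl ℓ p.1 ∧ constantCoeff p.1 ≠ 0 ∧ (∀ j, IsMult ℓ (p.2.1 j)) ∧
    IsMult ℓ p.2.2 ∧ p.2.2 ^ ℓ = ∏ j, p.2.1 j

/-- The multiple Riordan product
`(g; f₁,…,f_ℓ)(d; h₁,…,h_ℓ) = (g·d(h); (f₁/h)h₁(h), …, (f_ℓ/h)h_ℓ(h))`,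
where `h = (f₁⋯f_ℓ)^{1/ℓ}`. -/
noncomputable def mrMul {K : Type*} [Field K] {ℓ : ℕ}
    (p q : PowerSeries K × (Fin ℓ → PowerSeries K) × PowerSeries K) :
    PowerSeries K × (Fin ℓ → PowerSeries K) × PowerSeries K :=
  (p.1 * pcomp q.1 p.2.2,
    fun j => pdivX (p.2.1 j) * (pdivX p.2.2)⁻¹ * pcomp (q.2.1 j) p.2.2,
    pcomp q.2.2 p.2.2)

section
variable {K : Type*} [Field K]

theorem coeff_pcomp {g f : PowerSeries K} {n : ℕ} :
    coeff n (pcomp g f) = ∑ k ∈ Finset.range (n + 1), coeff k g * coeff n (f ^ k) := by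
  simp [pcomp]

theorem coeff_pdivX {f : PowerSeries K} {n : ℕ} : coeff n (pdivX f) = coeff (n + 1) f := by
  simp [pdivX]

theorem constantCoeff_pdivX {f : PowerSeries K} :
    constantCoeff (pdivX f) = coeff 1 f := by
  rw [← coeff_zero_eq_constantCoeff, coeff_pdivX]

theorem pdivX_X_mul (s : PowerSeries K) : pdivX (X * s) = s := by
  ext n; rw [coeff_pdivX, coeff_succ_X_mul]

theorem eq_X_mul_pdivX {f : PowerSeries K} (hf : constantCoeff f = 0) :
    f = X * pdivX f := by
  ext n
  cases n with
  | zero => rw [coeff_zero_X_mul, coeff_zero_eq_constantCoeff, hf]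
  | succ m => rw [coeff_succ_X_mul, coeff_pdivX]

theorem pdivX_X : pdivX (X : PowerSeries K) = 1 := by
  have : (X : PowerSeries K) = X * 1 := (mul_one X).symm
  rw [this, pdivX_X_mul]

theorem coeff_pow_eq_zero {f : PowerSeries K} (hf : constantCoeff f = 0) {n k : ℕ}
    (h : n < k) : coeff n (f ^ k) = 0 := by
  rw [eq_X_mul_pdivX hf, mul_pow, coeff_X_pow_mul', if_neg (by omega)]

theorem coeff_pow_self {f : PowerSeries K} (hf : constantCoeff f = 0) (n : ℕ) :
    coeff n (f ^ n) = (coeff 1 f) ^ n := by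
  rw [eq_X_mul_pdivX hf, mul_pow, coeff_X_pow_mul', if_pos le_rfl, Nat.sub_self,
    coeff_zero_eq_constantCoeff, map_pow, constantCoeff_pdivX, ← eq_X_mul_pdivX hf]

/-- inverse uniqueness -/
theorem inv_unique' {a b : PowerSeries K} (ha : constantCoeff a ≠ 0) (hab : a * b = 1) :
    a⁻¹ = b := by
  have := PowerSeries.inv_mul_cancel a ha
  calc a⁻¹ = a⁻¹ * (a * b) := by rw [hab, mul_one]
    _ = (a⁻¹ * a) * b := by ring
    _ = b := by rw [this, one_mul]

open Polynomial in
/-- Core: coefficient of `aeval f P` for `f` with zero constant term. -/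
theorem coeff_aeval {f : PowerSeries K} (hf : constantCoeff f = 0) (P : Polynomial K) (n : ℕ) :
    coeff n (Polynomial.aeval f P) = ∑ k ∈ Finset.range (n + 1), P.coeff k * coeff n (f ^ k) := by
  rw [Polynomial.aeval_eq_sum_range' (n := max (n + 1) (P.natDegree + 1)) (by omega) f, map_sum]
  rw [← Finset.sum_subset (Finset.range_subset_range.2 (le_max_left (n+1) (P.natDegree+1)))]
  · apply Finset.sum_congr rfl
    intro k _
    rw [LinearMap.map_smul, smul_eq_mul]
  · intro k _ hk
    rw [LinearMap.map_smul, smul_eq_mul, coeff_pow_eq_zero hf (by simp at hk; omega), mul_zero]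

theorem coeff_pcomp_eq_coeff_aeval {g f : PowerSeries K} (hf : constantCoeff f = 0) (n : ℕ) :
    coeff n (pcomp g f) = coeff n (Polynomial.aeval f (trunc (n + 1) g)) := by
  rw [coeff_pcomp, coeff_aeval hf]
  apply Finset.sum_congr rfl
  intro k hk
  rw [coeff_trunc, if_pos (Finset.mem_range.mp hk)]

/-- coefficients up to n of a power agree if the bases agree up to n -/
theorem coeff_pow_congr {z z' : PowerSeries K} {n : ℕ}
    (h : ∀ m ≤ n, coeff m z = coeff m z') (k : ℕ) :
    ∀ m ≤ n, coeff m (z ^ k) = coeff m (z' ^ k) := by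
  induction k with
  | zero => intro m _; rfl
  | succ k ih =>
    intro m hm
    rw [pow_succ, pow_succ, coeff_mul, coeff_mul]
    apply Finset.sum_congr rfl
    intro x hx
    rw [Finset.HasAntidiagonal.mem_antidiagonal] at hx
    rw [ih x.1 (by omega), h x.2 (by omega)]

theorem coeff_aeval_congr {z z' : PowerSeries K} {n : ℕ}
    (hz : constantCoeff z = 0) (hz' : constantCoeff z' = 0)
    (h : ∀ m ≤ n, coeff m z = coeff m z') (P : Polynomial K) :
    coeff n (Polynomial.aeval z P) = coeff n (Polynomial.aeval z' P) := by
  rw [coeff_aeval hz, coeff_aeval hz']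
  exact Finset.sum_congr rfl fun k _ => by
    rw [coeff_pow_congr h k n le_rfl]

theorem coeff_aeval_congr_poly {f : PowerSeries K} (hf : constantCoeff f = 0) {n : ℕ}
    {P Q : Polynomial K} (h : ∀ k ≤ n, P.coeff k = Q.coeff k) :
    coeff n (Polynomial.aeval f P) = coeff n (Polynomial.aeval f Q) := by
  rw [coeff_aeval hf, coeff_aeval hf]
  exact Finset.sum_congr rfl fun k hk => by rw [h k (by simpa using Nat.lt_succ_iff.mp (Finset.mem_range.mp hk))]

theorem pcomp_one {f : PowerSeries K} : pcomp 1 f = 1 := by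
  ext n
  rw [coeff_pcomp]
  rw [Finset.sum_eq_single 0]
  · simp
  · intro k _ hk
    rw [coeff_one, if_neg hk, zero_mul]
  · simp

theorem coeff_pcomp_eq_coeff_aeval' {g f : PowerSeries K} (hf : constantCoeff f = 0)
    {n : ℕ} {m : ℕ} (hm : m ≤ n) :
    coeff m (pcomp g f) = coeff m (Polynomial.aeval f (trunc (n + 1) g)) := by
  rw [coeff_pcomp, coeff_aeval hf]
  apply Finset.sum_congr rfl
  intro k hk
  rw [Finset.mem_range] at hk
  rw [coeff_trunc, if_pos (by omega)]

theorem pcomp_mul {f : PowerSeries K} (hf : constantCoeff f = 0) (a b : PowerSeries K) :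
    pcomp (a * b) f = pcomp a f * pcomp b f := by
  ext n
  set A := trunc (n+1) a
  set B := trunc (n+1) b
  have key : ∀ k ≤ n, (trunc (n+1) (a*b)).coeff k = (A * B).coeff k := by
    intro k hk
    have h1 := congrArg (fun P => Polynomial.coeff P k) (trunc_trunc_mul_trunc (n := n+1) a b)
    simp only [coeff_trunc, if_pos (show k < n+1 by omega)] at h1
    rw [coeff_trunc, if_pos (show k < n+1 by omega), ← h1, ← Polynomial.coeff_coe,
      Polynomial.coe_mul]
  calc coeff n (pcomp (a * b) f) = coeff n (Polynomial.aeval f (trunc (n+1) (a*b))) :=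
        coeff_pcomp_eq_coeff_aeval hf n
    _ = coeff n (Polynomial.aeval f (A * B)) := coeff_aeval_congr_poly hf key
    _ = coeff n (Polynomial.aeval f A * Polynomial.aeval f B) := by rw [map_mul]
    _ = coeff n (pcomp a f * pcomp b f) := by
        rw [coeff_mul, coeff_mul]
        apply Finset.sum_congr rfl
        intro x hx
        rw [Finset.HasAntidiagonal.mem_antidiagonal] at hx
        rw [coeff_pcomp_eq_coeff_aeval' hf (show x.1 ≤ n by omega),
          coeff_pcomp_eq_coeff_aeval' hf (show x.2 ≤ n by omega)]


theorem pcomp_X_right (a : PowerSeries K) : pcomp a X = a := by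
  ext n
  rw [coeff_pcomp, Finset.sum_eq_single n]
  · rw [coeff_X_pow, if_pos rfl, mul_one]
  · intro k _ hk
    rw [coeff_X_pow, if_neg (Ne.symm hk), mul_zero]
  · intro h; simp at h

theorem pcomp_X_left {f : PowerSeries K} (hf : constantCoeff f = 0) :
    pcomp X f = f := by
  ext n
  rw [coeff_pcomp]
  cases n with
  | zero =>
    simp [coeff_zero_eq_constantCoeff, hf]
  | succ m =>
    rw [Finset.sum_eq_single 1]
    · rw [coeff_X, if_pos rfl, pow_one, one_mul]
    · intro k _ hk
      rw [coeff_X, if_neg hk, zero_mul]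
    · intro h; simp at h

theorem constantCoeff_pcomp {a f : PowerSeries K} :
    constantCoeff (pcomp a f) = constantCoeff a := by
  rw [← coeff_zero_eq_constantCoeff, coeff_pcomp]
  simp

theorem coeff_one_pcomp {a f : PowerSeries K} (hf : constantCoeff f = 0) :
    coeff 1 (pcomp a f) = coeff 1 a * coeff 1 f := by
  rw [coeff_pcomp, Finset.sum_range_succ, Finset.sum_range_one]
  simp

theorem pcomp_pcomp {a b c : PowerSeries K} (hb : constantCoeff b = 0)
    (hc : constantCoeff c = 0) : pcomp (pcomp a b) c = pcomp a (pcomp b c) := by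
  ext n
  set Q := trunc (n+1) a with hQ
  set B := trunc (n+1) b with hB
  have hB0 : B.coeff 0 = 0 := by
    rw [hB, coeff_trunc, if_pos (Nat.succ_pos n), coeff_zero_eq_constantCoeff, hb]
  have hBc : constantCoeff (B : PowerSeries K) = 0 := by
    rw [← coeff_zero_eq_constantCoeff, Polynomial.coeff_coe, hB0]
  have hbB : ∀ m ≤ n, coeff m b = coeff m (B : PowerSeries K) := by
    intro m hm
    rw [Polynomial.coeff_coe, coeff_trunc, if_pos (by omega)]
  have haB : constantCoeff (Polynomial.aeval c B) = 0 := by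
    rw [← coeff_zero_eq_constantCoeff, coeff_aeval hc]
    simp [hB0]
  have hbc0 : constantCoeff (pcomp b c) = 0 := by
    rw [constantCoeff_pcomp, hb]
  -- pcomp b c agrees with aeval c B up to n
  have agree : ∀ m ≤ n, coeff m (pcomp b c) = coeff m (Polynomial.aeval c B) := by
    intro m hm
    exact coeff_pcomp_eq_coeff_aeval' hc hm
  calc coeff n (pcomp (pcomp a b) c)
      = coeff n (Polynomial.aeval c (trunc (n+1) (pcomp a b))) :=
        coeff_pcomp_eq_coeff_aeval hc n
    _ = coeff n (Polynomial.aeval c (Q.comp B)) := by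
        apply coeff_aeval_congr_poly hc
        intro k hk
        rw [coeff_trunc, if_pos (by omega)]
        have e1 : coeff k (pcomp a b) = coeff k (Polynomial.aeval b Q) :=
          coeff_pcomp_eq_coeff_aeval' hb hk
        have e2 : coeff k (Polynomial.aeval b Q)
            = coeff k (Polynomial.aeval (B : PowerSeries K) Q) :=
          coeff_aeval_congr hb hBc (fun m hm => hbB m (le_trans hm hk)) Q
        have e3 : ((Q.comp B : Polynomial K) : PowerSeries K)
            = Polynomial.aeval (B : PowerSeries K) Q := by
          have h4 := Polynomial.aeval_algHom_apply (Polynomial.coeToPowerSeries.algHom K) B Q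
          simp only [Polynomial.coeToPowerSeries.algHom_apply, Algebra.algebraMap_self,
            PowerSeries.map_id, id_eq] at h4
          rw [Polynomial.comp_eq_aeval, ← h4]
        rw [e1, e2, ← e3, Polynomial.coeff_coe]
    _ = coeff n (Polynomial.aeval (Polynomial.aeval c B) Q) := by
        rw [Polynomial.aeval_comp]
    _ = coeff n (Polynomial.aeval (pcomp b c) Q) :=
        (coeff_aeval_congr haB hbc0 (fun m hm => (agree m hm).symm) Q)
    _ = coeff n (pcomp a (pcomp b c)) :=
        (coeff_pcomp_eq_coeff_aeval hbc0 n).symm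

/-- support of powers of a series supported in degrees ≡ 1 mod ℓ -/
theorem coeff_pow_suppone {ℓ : ℕ} {h : PowerSeries K}
    (hh : ∀ n : ℕ, n % ℓ ≠ 1 % ℓ → coeff n h = 0) :
    ∀ k n : ℕ, n % ℓ ≠ k % ℓ → coeff n (h ^ k) = 0 := by
  intro k
  induction k with
  | zero =>
    intro n hn
    rw [pow_zero, coeff_one, if_neg (by rintro rfl; exact hn rfl)]
  | succ k ih =>
    intro n hn
    rw [pow_succ, mul_comm, coeff_mul]
    apply Finset.sum_eq_zero
    intro x hx
    rw [Finset.HasAntidiagonal.mem_antidiagonal] at hx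
    by_cases h1 : x.1 % ℓ = 1 % ℓ
    · by_cases h2 : x.2 % ℓ = k % ℓ
      · exfalso
        apply hn
        rw [← hx, Nat.add_mod, h1, h2, ← Nat.add_mod, Nat.add_comm]
      · rw [ih x.2 h2, mul_zero]
    · rw [hh x.1 h1, zero_mul]

theorem InTl.mul {ℓ : ℕ} {a b : PowerSeries K} (ha : InTl ℓ a) (hb : InTl ℓ b) :
    InTl ℓ (a * b) := by
  intro n hn
  rw [coeff_mul]
  apply Finset.sum_eq_zero
  intro x hx
  rw [Finset.HasAntidiagonal.mem_antidiagonal] at hx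
  by_cases h1 : ℓ ∣ x.1
  · by_cases h2 : ℓ ∣ x.2
    · exact absurd (hx ▸ Nat.dvd_add h1 h2) hn
    · rw [hb x.2 h2, mul_zero]
  · rw [ha x.1 h1, zero_mul]

theorem InTl.mul_suppone {ℓ : ℕ} {a b : PowerSeries K} (ha : InTl ℓ a)
    (hb : ∀ n : ℕ, n % ℓ ≠ 1 % ℓ → coeff n b = 0) :
    ∀ n : ℕ, n % ℓ ≠ 1 % ℓ → coeff n (a * b) = 0 := by
  intro n hn
  rw [coeff_mul]
  apply Finset.sum_eq_zero
  intro x hx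
  rw [Finset.HasAntidiagonal.mem_antidiagonal] at hx
  by_cases h1 : ℓ ∣ x.1
  · by_cases h2 : x.2 % ℓ = 1 % ℓ
    · exfalso
      apply hn
      obtain ⟨c, hc⟩ := h1
      rw [← hx, hc, Nat.add_mod, Nat.mul_mod_right, zero_add, Nat.mod_mod, h2]
    · rw [hb x.2 h2, mul_zero]
  · rw [ha x.1 h1, zero_mul]

theorem InTl.inv {ℓ : ℕ} {f : PowerSeries K} (hf : InTl ℓ f) : InTl ℓ f⁻¹ := by
  intro n
  induction n using Nat.strong_induction_on with
  | _ n ih =>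
    intro hn
    have hn0 : n ≠ 0 := by rintro rfl; exact hn (dvd_zero ℓ)
    rw [PowerSeries.coeff_inv, if_neg hn0]
    have hz : ∑ x ∈ Finset.HasAntidiagonal.antidiagonal n,
        (if x.2 < n then coeff x.1 f * coeff x.2 f⁻¹ else 0) = 0 := by
      apply Finset.sum_eq_zero
      intro x hx
      rw [Finset.HasAntidiagonal.mem_antidiagonal] at hx
      split_ifs with hlt
      · by_cases h2 : ℓ ∣ x.2
        · by_cases h1 : ℓ ∣ x.1
          · exact absurd (hx ▸ Nat.dvd_add h1 h2) hn
          · rw [hf x.1 h1, zero_mul]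
        · rw [ih x.2 hlt h2, mul_zero]
      · rfl
    rw [hz, mul_zero]

theorem InTl.pcomp' {ℓ : ℕ} {a h : PowerSeries K} (ha : InTl ℓ a)
    (hh : ∀ n : ℕ, n % ℓ ≠ 1 % ℓ → coeff n h = 0) : InTl ℓ (pcomp a h) := by
  intro n hn
  rw [coeff_pcomp]
  apply Finset.sum_eq_zero
  intro k _
  by_cases h1 : ℓ ∣ k
  · by_cases h2 : n % ℓ = k % ℓ
    · exfalso
      obtain ⟨c, rfl⟩ := h1
      rw [Nat.mul_mod_right] at h2
      exact hn (Nat.dvd_of_mod_eq_zero h2)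
    · rw [coeff_pow_suppone hh k n h2, mul_zero]
  · rw [ha k h1, zero_mul]

theorem suppone_pcomp {ℓ : ℕ} {a h : PowerSeries K}
    (ha : ∀ n : ℕ, n % ℓ ≠ 1 % ℓ → coeff n a = 0)
    (hh : ∀ n : ℕ, n % ℓ ≠ 1 % ℓ → coeff n h = 0) :
    ∀ n : ℕ, n % ℓ ≠ 1 % ℓ → coeff n (pcomp a h) = 0 := by
  intro n hn
  rw [coeff_pcomp]
  apply Finset.sum_eq_zero
  intro k _
  by_cases h1 : k % ℓ = 1 % ℓ
  · by_cases h2 : n % ℓ = k % ℓ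
    · exact absurd (h2.trans h1) hn
    · rw [coeff_pow_suppone hh k n h2, mul_zero]
  · rw [ha k h1, zero_mul]

theorem InTl.pdivX' {ℓ : ℕ} {f : PowerSeries K}
    (hf : ∀ n : ℕ, n % ℓ ≠ 1 % ℓ → coeff n f = 0) : InTl ℓ (pdivX f) := by
  intro n hn
  rw [coeff_pdivX]
  apply hf
  intro hmod
  have h1 : Nat.ModEq ℓ 1 (n+1) := hmod.symm
  have h2 : ℓ ∣ (n + 1) - 1 := (Nat.modEq_iff_dvd' (by omega)).mp h1
  simp only [Nat.add_sub_cancel] at h2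
  exact hn h2

/-- Coefficients of the compositional right inverse of `h`. -/
noncomputable def rinvC (h : PowerSeries K) : ℕ → K
  | 0 => 0
  | (n+1) =>
    (coeff 1 h ^ (n+1))⁻¹ * ((if n + 1 = 1 then 1 else 0)
      - ∑ k ∈ (Finset.range (n+1)).attach, rinvC h k.1 * coeff (n+1) (h ^ k.1))
  decreasing_by exact Finset.mem_range.mp k.2

theorem rinvC_succ (h : PowerSeries K) (n : ℕ) :
    rinvC h (n+1) = (coeff 1 h ^ (n+1))⁻¹ * ((if n + 1 = 1 then 1 else 0)
      - ∑ k ∈ Finset.range (n+1), rinvC h k * coeff (n+1) (h ^ k)) := by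
  rw [rinvC, ← Finset.sum_attach (Finset.range (n+1)) (fun k => rinvC h k * coeff (n+1) (h ^ k))]

noncomputable def rinv (h : PowerSeries K) : PowerSeries K := PowerSeries.mk (rinvC h)

theorem constantCoeff_rinv (h : PowerSeries K) : constantCoeff (rinv h) = 0 := by
  rw [rinv, constantCoeff_mk, rinvC]

theorem pcomp_rinv (h : PowerSeries K) (h0 : constantCoeff h = 0)
    (h1 : coeff 1 h ≠ 0) : pcomp (rinv h) h = X := by
  ext n
  rw [coeff_pcomp]
  cases n with
  | zero =>
    simp [rinv, rinvC]
  | succ m =>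
    rw [Finset.sum_range_succ]
    have hcoef : ∀ k, coeff k (rinv h) = rinvC h k := fun k => coeff_mk k _
    simp only [hcoef]
    rw [rinvC_succ, coeff_pow_self h0, coeff_X]
    have hinv : (coeff 1 h ^ (m+1))⁻¹ * coeff 1 h ^ (m+1) = 1 :=
      inv_mul_cancel₀ (pow_ne_zero _ h1)
    rw [mul_assoc, mul_comm (_ - _), ← mul_assoc, hinv, one_mul]
    ring_nf

theorem rinv_suppone {ℓ : ℕ} {h : PowerSeries K}
    (hh : ∀ n : ℕ, n % ℓ ≠ 1 % ℓ → coeff n h = 0) :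
    ∀ n : ℕ, n % ℓ ≠ 1 % ℓ → coeff n (rinv h) = 0 := by
  intro n
  induction n using Nat.strong_induction_on with
  | _ n ih =>
    intro hn
    rw [rinv, coeff_mk]
    cases n with
    | zero => rw [rinvC]
    | succ m =>
      rw [rinvC_succ]
      have hδ : (if m + 1 = 1 then (1:K) else 0) = 0 := by
        split_ifs with h'
        · exact absurd (h' ▸ hn) (fun t => t rfl)
        · rfl
      have hsum : ∑ k ∈ Finset.range (m+1), rinvC h k * coeff (m+1) (h ^ k) = 0 := by
        apply Finset.sum_eq_zero
        intro k hk
        by_cases h2 : (m+1) % ℓ = k % ℓ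
        · have : k % ℓ ≠ 1 % ℓ := fun t => hn (h2.trans t)
          have := ih k (Finset.mem_range.mp hk) this
          rw [rinv, coeff_mk] at this
          rw [this, zero_mul]
        · rw [coeff_pow_suppone hh k (m+1) h2, mul_zero]
      rw [hδ, hsum, sub_zero, mul_zero]

theorem coeff_one_mul' (a b : PowerSeries K) : coeff 1 (a * b) =
    constantCoeff a * coeff 1 b + coeff 1 a * constantCoeff b := by
  rw [coeff_mul, Finset.Nat.sum_antidiagonal_eq_sum_range_succ_mk,
    Finset.sum_range_succ, Finset.sum_range_one]
  simp [coeff_zero_eq_constantCoeff]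

/-- `pcomp · f` as a monoid hom. -/
noncomputable def pcompHom (f : PowerSeries K) (hf : constantCoeff f = 0) :
    PowerSeries K →* PowerSeries K where
  toFun a := pcomp a f
  map_one' := pcomp_one
  map_mul' a b := pcomp_mul hf a b

theorem pcomp_prod {ι : Type*} (s : Finset ι) (F : ι → PowerSeries K)
    {f : PowerSeries K} (hf : constantCoeff f = 0) :
    pcomp (∏ i ∈ s, F i) f = ∏ i ∈ s, pcomp (F i) f :=
  map_prod (pcompHom f hf) F s

theorem pcomp_pow {a f : PowerSeries K} (hf : constantCoeff f = 0) (m : ℕ) :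
    pcomp (a ^ m) f = (pcomp a f) ^ m :=
  map_pow (pcompHom f hf) a m

theorem ps_inv_one : (1 : PowerSeries K)⁻¹ = 1 :=
  inv_unique' (by rw [map_one]; exact one_ne_zero) (one_mul 1)

theorem pdivX_pcomp {u h : PowerSeries K} (hu : constantCoeff u = 0)
    (hh : constantCoeff h = 0) :
    pdivX (pcomp u h) = pdivX h * pcomp (pdivX u) h := by
  have e : pcomp u h = X * (pdivX h * pcomp (pdivX u) h) := by
    conv_lhs => rw [eq_X_mul_pdivX hu]
    rw [pcomp_mul hh, pcomp_X_left hh]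
    nth_rewrite 1 [eq_X_mul_pdivX hh]
    ring
  rw [e, pdivX_X_mul]

theorem IsMult.pcomp'' {ℓ : ℕ} {u h : PowerSeries K} (hu : IsMult ℓ u)
    (hh : IsMult ℓ h) : IsMult ℓ (pcomp u h) := by
  refine ⟨?_, suppone_pcomp hu.2.1 hh.2.1, ?_⟩
  · rw [constantCoeff_pcomp, hu.1]
  · rw [coeff_one_pcomp hh.1]
    exact mul_ne_zero hu.2.2 hh.2.2

theorem IsMult.mul_left {ℓ : ℕ} {a b : PowerSeries K} (ha : InTl ℓ a)
    (ha0 : constantCoeff a ≠ 0) (hb : IsMult ℓ b) : IsMult ℓ (a * b) := by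
  refine ⟨?_, InTl.mul_suppone ha hb.2.1, ?_⟩
  · rw [map_mul, hb.1, mul_zero]
  · rw [coeff_one_mul', hb.1, mul_zero, add_zero]
    exact mul_ne_zero ha0 hb.2.2

theorem InTl.one {ℓ : ℕ} : InTl ℓ (1 : PowerSeries K) := by
  intro n hn
  rw [coeff_one, if_neg]
  rintro rfl
  exact hn (dvd_zero ℓ)

theorem IsMult.X' {ℓ : ℕ} : IsMult ℓ (X : PowerSeries K) := by
  refine ⟨constantCoeff_X, fun n hn => ?_, ?_⟩
  · rw [coeff_X, if_neg]; rintro rfl; exact hn rfl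
  · rw [coeff_X, if_pos rfl]; exact one_ne_zero

theorem prod_pdivX_eq {ℓ : ℕ} {f : Fin ℓ → PowerSeries K} {h : PowerSeries K}
    (hf0 : ∀ j, constantCoeff (f j) = 0) (hh0 : constantCoeff h = 0)
    (hprod : h ^ ℓ = ∏ j, f j) :
    (pdivX h) ^ ℓ = ∏ j, pdivX (f j) := by
  have hX : (X : PowerSeries K) ^ ℓ ≠ 0 := pow_ne_zero _ X_ne_zero
  apply mul_left_cancel₀ hX
  calc X ^ ℓ * pdivX h ^ ℓ = (X * pdivX h) ^ ℓ := (mul_pow _ _ _).symm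
    _ = h ^ ℓ := by rw [← eq_X_mul_pdivX hh0]
    _ = ∏ j, f j := hprod
    _ = ∏ j, (X * pdivX (f j)) := Finset.prod_congr rfl fun j _ => eq_X_mul_pdivX (hf0 j)
    _ = (∏ _j : Fin ℓ, (X : PowerSeries K)) * ∏ j, pdivX (f j) := Finset.prod_mul_distrib
    _ = X ^ ℓ * ∏ j, pdivX (f j) := by
        rw [Finset.prod_const, Finset.card_univ, Fintype.card_fin]

section MR
variable {ℓ : ℕ}

theorem mr_closure (hℓ : 1 ≤ ℓ) (p q : PowerSeries K × (Fin ℓ → PowerSeries K) × PowerSeries K)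
    (hp : IsMR ℓ p) (hq : IsMR ℓ q) : IsMR ℓ (mrMul p q) := by
  obtain ⟨hg, hg0, hf, hh, hprod⟩ := hp
  obtain ⟨hd, hd0, hu, hk, hqprod⟩ := hq
  have hh0 := hh.1
  have hhs := hh.2.1
  have hh1 := hh.2.2
  refine ⟨?_, ?_, ?_, ?_, ?_⟩
  · exact hg.mul (InTl.pcomp' hd hhs)
  · rw [mrMul, map_mul, constantCoeff_pcomp]
    exact mul_ne_zero hg0 hd0
  · intro j
    refine IsMult.mul_left ?_ ?_ (IsMult.pcomp'' (hu j) hh)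
    · exact (InTl.pdivX' (hf j).2.1).mul (InTl.pdivX' hhs).inv
    · rw [map_mul, constantCoeff_pdivX, PowerSeries.constantCoeff_inv, constantCoeff_pdivX]
      exact mul_ne_zero (hf j).2.2 (inv_ne_zero hh1)
  · exact IsMult.pcomp'' hk hh
  · show (pcomp q.2.2 p.2.2) ^ ℓ = ∏ j, (pdivX (p.2.1 j) * (pdivX p.2.2)⁻¹ * pcomp (q.2.1 j) p.2.2)
    have key1 : (pdivX p.2.2) ^ ℓ = ∏ j, pdivX (p.2.1 j) :=
      prod_pdivX_eq (fun j => (hf j).1) hh0 hprod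
    have key2 : ∏ j, pcomp (q.2.1 j) p.2.2 = (pcomp q.2.2 p.2.2) ^ ℓ := by
      rw [← pcomp_prod _ _ hh0, ← hqprod, pcomp_pow hh0]
    calc (pcomp q.2.2 p.2.2) ^ ℓ
        = ((pdivX p.2.2) ^ ℓ * ((pdivX p.2.2)⁻¹) ^ ℓ) * (pcomp q.2.2 p.2.2) ^ ℓ := by
          rw [← mul_pow, PowerSeries.mul_inv_cancel _ (by
            rw [constantCoeff_pdivX]; exact hh1), one_pow, one_mul]
      _ = (∏ j, pdivX (p.2.1 j)) * (∏ _j : Fin ℓ, (pdivX p.2.2)⁻¹) * ∏ j, pcomp (q.2.1 j) p.2.2 := by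
          rw [← key1, ← key2, Finset.prod_const, Finset.card_univ, Fintype.card_fin]
      _ = ∏ j, (pdivX (p.2.1 j) * (pdivX p.2.2)⁻¹ * pcomp (q.2.1 j) p.2.2) := by
          rw [Finset.prod_mul_distrib, Finset.prod_mul_distrib]

theorem mr_assoc (p q r : PowerSeries K × (Fin ℓ → PowerSeries K) × PowerSeries K)
    (hp : IsMR ℓ p) (hq : IsMR ℓ q) (hr : IsMR ℓ r) :
    mrMul (mrMul p q) r = mrMul p (mrMul q r) := by
  obtain ⟨hg, hg0, hf, hh, hprod⟩ := hp
  obtain ⟨hd, hd0, hu, hk, hqprod⟩ := hq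
  have hh0 := hh.1
  have hh1 : constantCoeff (pdivX p.2.2) ≠ 0 := by rw [constantCoeff_pdivX]; exact hh.2.2
  have hk0 := hk.1
  have hk1 : constantCoeff (pdivX q.2.2) ≠ 0 := by rw [constantCoeff_pdivX]; exact hk.2.2
  have hch : pdivX p.2.2 * (pdivX p.2.2)⁻¹ = 1 := PowerSeries.mul_inv_cancel _ hh1
  simp only [mrMul, Prod.mk.injEq]
  refine ⟨?_, ?_, ?_⟩
  · rw [pcomp_mul hh0, pcomp_pcomp hk0 hh0, mul_assoc]
  · funext j
    have hu0 : constantCoeff (q.2.1 j) = 0 := (hu j).1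
    have huc : constantCoeff (pcomp (q.2.1 j) p.2.2) = 0 := by
      rw [constantCoeff_pcomp, hu0]
    have e1 : pdivX (p.2.1 j) * (pdivX p.2.2)⁻¹ * pcomp (q.2.1 j) p.2.2
        = X * (pdivX (p.2.1 j) * (pdivX p.2.2)⁻¹ * pdivX (pcomp (q.2.1 j) p.2.2)) := by
      nth_rewrite 1 [eq_X_mul_pdivX huc]
      ring
    rw [e1, pdivX_X_mul, pdivX_pcomp hu0 hh0, pdivX_pcomp hk0 hh0]
    have hCk : constantCoeff (pcomp (pdivX q.2.2) p.2.2) ≠ 0 := by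
      rw [constantCoeff_pcomp]; exact hk1
    have hinv1 : (pdivX p.2.2 * pcomp (pdivX q.2.2) p.2.2)⁻¹
        = (pdivX p.2.2)⁻¹ * (pcomp (pdivX q.2.2) p.2.2)⁻¹ := by
      apply inv_unique'
      · rw [map_mul]; exact mul_ne_zero hh1 hCk
      · calc pdivX p.2.2 * pcomp (pdivX q.2.2) p.2.2 * ((pdivX p.2.2)⁻¹ * (pcomp (pdivX q.2.2) p.2.2)⁻¹)
            = (pdivX p.2.2 * (pdivX p.2.2)⁻¹) * (pcomp (pdivX q.2.2) p.2.2 * (pcomp (pdivX q.2.2) p.2.2)⁻¹) := by ring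
          _ = 1 := by rw [hch, PowerSeries.mul_inv_cancel _ hCk, one_mul]
    have hinv2 : (pcomp (pdivX q.2.2) p.2.2)⁻¹ = pcomp (pdivX q.2.2)⁻¹ p.2.2 := by
      apply inv_unique' hCk
      rw [← pcomp_mul hh0, PowerSeries.mul_inv_cancel _ hk1, pcomp_one]
    rw [hinv1, hinv2, pcomp_mul hh0, pcomp_mul hh0, pcomp_pcomp hk0 hh0]
    linear_combination (pdivX (p.2.1 j) * (pdivX p.2.2)⁻¹ * pcomp (pdivX (q.2.1 j)) p.2.2 *
      pcomp (pdivX q.2.2)⁻¹ p.2.2 * pcomp (r.2.1 j) (pcomp q.2.2 p.2.2)) * hch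
  · rw [pcomp_pcomp hk0 hh0]

theorem mr_id : IsMR ℓ ((1, fun _ => X, X) : PowerSeries K × (Fin ℓ → PowerSeries K) × PowerSeries K) := by
  refine ⟨InTl.one, by rw [map_one]; exact one_ne_zero, fun _ => IsMult.X', IsMult.X', ?_⟩
  show (X : PowerSeries K) ^ ℓ = ∏ _j : Fin ℓ, X
  rw [Finset.prod_const, Finset.card_univ, Fintype.card_fin]

theorem mr_id_left (p : PowerSeries K × (Fin ℓ → PowerSeries K) × PowerSeries K)
    (_hp : IsMR ℓ p) : mrMul (1, fun _ => X, X) p = p := by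
  obtain ⟨g, f, h⟩ := p
  simp only [mrMul, Prod.mk.injEq]
  refine ⟨by rw [one_mul, pcomp_X_right], funext fun j => ?_, pcomp_X_right h⟩
  rw [pdivX_X, ps_inv_one, mul_one, one_mul, pcomp_X_right]

theorem mr_id_right (p : PowerSeries K × (Fin ℓ → PowerSeries K) × PowerSeries K)
    (hp : IsMR ℓ p) : mrMul p (1, fun _ => X, X) = p := by
  obtain ⟨g, f, h⟩ := p
  obtain ⟨hg, hg0, hf, hh, hprod⟩ := hp
  have hf' : ∀ j, IsMult ℓ (f j) := hf
  have hh0 : constantCoeff h = 0 := hh.1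
  have hh1 : constantCoeff (pdivX h) ≠ 0 := by rw [constantCoeff_pdivX]; exact hh.2.2
  have hch : pdivX h * (pdivX h)⁻¹ = 1 := PowerSeries.mul_inv_cancel _ hh1
  simp only [mrMul, Prod.mk.injEq]
  refine ⟨by rw [pcomp_one, mul_one], funext fun j => ?_, pcomp_X_left hh0⟩
  show pdivX (f j) * (pdivX h)⁻¹ * pcomp X h = f j
  rw [pcomp_X_left hh0]
  nth_rewrite 2 [eq_X_mul_pdivX hh0]
  nth_rewrite 2 [eq_X_mul_pdivX (hf' j).1]
  linear_combination (X * pdivX (f j)) * hch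

theorem mr_right_inv (hℓ : 1 ≤ ℓ) (p : PowerSeries K × (Fin ℓ → PowerSeries K) × PowerSeries K)
    (hp : IsMR ℓ p) : ∃ q, IsMR ℓ q ∧ mrMul p q = (1, fun _ => X, X) := by
  obtain ⟨hg, hg0, hf, hh, hprod⟩ := hp
  have hh0 := hh.1
  have hhs := hh.2.1
  have hh1 := hh.2.2
  have hph1 : constantCoeff (pdivX p.2.2) ≠ 0 := by rw [constantCoeff_pdivX]; exact hh1
  set H := rinv p.2.2 with hHdef
  have hcomp : pcomp H p.2.2 = X := pcomp_rinv _ hh0 hh1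
  have hH0 : constantCoeff H = 0 := constantCoeff_rinv _
  have hHs : ∀ n : ℕ, n % ℓ ≠ 1 % ℓ → coeff n H = 0 := rinv_suppone hhs
  have hH1 : coeff 1 H ≠ 0 := by
    have := coeff_one_pcomp (a := H) (f := p.2.2) hh0
    rw [hcomp, coeff_X, if_pos rfl] at this
    exact left_ne_zero_of_mul_eq_one this.symm
  have hHmult : IsMult ℓ H := ⟨hH0, hHs, hH1⟩
  set w : Fin ℓ → PowerSeries K := fun j => X * pdivX p.2.2 * (pdivX (p.2.1 j))⁻¹ with hwdef
  have hwm : ∀ j, IsMult ℓ (w j) := by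
    intro j
    have hfj1 : constantCoeff (pdivX (p.2.1 j)) ≠ 0 := by
      rw [constantCoeff_pdivX]; exact (hf j).2.2
    have hIn : InTl ℓ (pdivX p.2.2 * (pdivX (p.2.1 j))⁻¹) :=
      (InTl.pdivX' hhs).mul (InTl.pdivX' (hf j).2.1).inv
    have hrw : w j = (pdivX p.2.2 * (pdivX (p.2.1 j))⁻¹) * X := by rw [hwdef]; ring
    rw [hrw]
    refine ⟨?_, InTl.mul_suppone hIn IsMult.X'.2.1, ?_⟩
    · rw [map_mul, constantCoeff_X, mul_zero]
    · rw [coeff_one_mul', constantCoeff_X, mul_zero, add_zero, coeff_X, if_pos rfl, mul_one,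
        map_mul, constantCoeff_pdivX, PowerSeries.constantCoeff_inv, constantCoeff_pdivX]
      exact mul_ne_zero hh1 (inv_ne_zero (hf j).2.2)
  refine ⟨(pcomp p.1⁻¹ H, fun j => pcomp (w j) H, H), ⟨?_, ?_, ?_, hHmult, ?_⟩, ?_⟩
  · exact InTl.pcomp' hg.inv hHs
  · rw [constantCoeff_pcomp, PowerSeries.constantCoeff_inv]
    exact inv_ne_zero hg0
  · exact fun j => IsMult.pcomp'' (hwm j) hHmult
  · show H ^ ℓ = ∏ j, pcomp (w j) H
    have hwprod : ∏ j, w j = X ^ ℓ := by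
      have key1 : (pdivX p.2.2) ^ ℓ = ∏ j, pdivX (p.2.1 j) :=
        prod_pdivX_eq (fun j => (hf j).1) hh0 hprod
      calc ∏ j, w j = (∏ _j : Fin ℓ, (X * pdivX p.2.2)) * ∏ j, (pdivX (p.2.1 j))⁻¹ :=
            Finset.prod_mul_distrib
        _ = X ^ ℓ * ((pdivX p.2.2) ^ ℓ * ∏ j, (pdivX (p.2.1 j))⁻¹) := by
            rw [Finset.prod_const, Finset.card_univ, Fintype.card_fin, mul_pow]; ring
        _ = X ^ ℓ * ∏ j, (pdivX (p.2.1 j) * (pdivX (p.2.1 j))⁻¹) := by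
            rw [key1, Finset.prod_mul_distrib]
        _ = X ^ ℓ := by
            rw [Finset.prod_congr rfl fun j _ => PowerSeries.mul_inv_cancel _ (by
              rw [constantCoeff_pdivX]; exact (hf j).2.2)]
            rw [Finset.prod_const_one, mul_one]
    rw [← pcomp_prod _ _ hH0, hwprod, pcomp_pow hH0, pcomp_X_left hH0]
  · simp only [mrMul, Prod.mk.injEq]
    refine ⟨?_, funext fun j => ?_, hcomp⟩
    · rw [pcomp_pcomp hH0 hh0, hcomp, pcomp_X_right, PowerSeries.mul_inv_cancel _ hg0]
    · rw [pcomp_pcomp hH0 hh0, hcomp, pcomp_X_right, hwdef]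
      have c1 : pdivX p.2.2 * (pdivX p.2.2)⁻¹ = 1 := PowerSeries.mul_inv_cancel _ hph1
      have c2 : pdivX (p.2.1 j) * (pdivX (p.2.1 j))⁻¹ = 1 := PowerSeries.mul_inv_cancel _ (by
        rw [constantCoeff_pdivX]; exact (hf j).2.2)
      linear_combination (X * pdivX (p.2.1 j) * (pdivX (p.2.1 j))⁻¹) * c1 + X * c2

end MR

end

/-- The set of multiple Riordan arrays forms a group under the multiple Riordan
product, with identity `(1; t, …, t)`. -/
theorem multiple_riordan_group {K : Type*} [Field K] [CharZero K] (ℓ : ℕ) (hℓ : 1 ≤ ℓ) :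
    (∀ p q : PowerSeries K × (Fin ℓ → PowerSeries K) × PowerSeries K,
      IsMR ℓ p → IsMR ℓ q → IsMR ℓ (mrMul p q)) ∧
    (∀ p q r : PowerSeries K × (Fin ℓ → PowerSeries K) × PowerSeries K,
      IsMR ℓ p → IsMR ℓ q → IsMR ℓ r → mrMul (mrMul p q) r = mrMul p (mrMul q r)) ∧
    IsMR ℓ ((1, fun _ => X, X) : PowerSeries K × (Fin ℓ → PowerSeries K) × PowerSeries K) ∧
    (∀ p : PowerSeries K × (Fin ℓ → PowerSeries K) × PowerSeries K, IsMR ℓ p →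
      mrMul (1, fun _ => X, X) p = p ∧ mrMul p (1, fun _ => X, X) = p) ∧
    (∀ p : PowerSeries K × (Fin ℓ → PowerSeries K) × PowerSeries K, IsMR ℓ p →
      ∃ q : PowerSeries K × (Fin ℓ → PowerSeries K) × PowerSeries K, IsMR ℓ q ∧
        mrMul p q = (1, fun _ => X, X) ∧ mrMul q p = (1, fun _ => X, X)) := by
  
  refine ⟨mr_closure hℓ, mr_assoc, mr_id, fun p hp => ⟨mr_id_left p hp, mr_id_right p hp⟩, ?_⟩
  intro p hp
  obtain ⟨q, hq, hpq⟩ := mr_right_inv hℓ p hp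
  obtain ⟨r, hr, hqr⟩ := mr_right_inv hℓ q hq
  refine ⟨q, hq, hpq, ?_⟩
  have hqpMR : IsMR ℓ (mrMul q p) := mr_closure hℓ q p hq hp
  have h1 : mrMul (mrMul q p) (mrMul q r) = mrMul q r := by
    rw [← mr_assoc (mrMul q p) q r hqpMR hq hr, mr_assoc q p q hq hp hq, hpq,
      mr_id_right q hq]
  rw [hqr, mr_id_right (mrMul q p) hqpMR] at h1
  exact h1
end
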